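/- Let A, A' : ℝ^n → Sym_k(ℝ) be linear maps and let x ∈ ℝ^n with ‖x‖ ≤ n be such that A(x) + I is positive semidefinite. Set λ := 1/(1 + n·‖A − A'‖). Then A'(λx) + I is positive semidefinite. -/

import Mathlib

open Metric Set

noncomputable section

/-- A polytope: convex hull of a finite set. -/
def IsPolytope {d : ℕ} (P : Set (EuclideanSpace ℝ (Fin d))) : Prop :=
  ∃ V : Finset (EuclideanSpace ℝ (Fin d)), P = convexHull ℝ (V : Set (EuclideanSpace ℝ (Fin d)))

/-- `P` has an extended formulation with `l` LMIs of size `m`. -/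
def HasSdpExtBlocks {d : ℕ} (P : Set (EuclideanSpace ℝ (Fin d))) (l m : ℕ) : Prop :=
  ∃ (n : ℕ) (φ : EuclideanSpace ℝ (Fin n) →ᵃ[ℝ] EuclideanSpace ℝ (Fin d))
    (M : Fin l → (EuclideanSpace ℝ (Fin n) →ᵃ[ℝ] Matrix (Fin m) (Fin m) ℝ)),
    (∀ i x, (M i x).IsSymm) ∧ P = φ '' {x | ∀ i, (M i x).PosSemidef}

/-- `P` has an extended formulation with a single LMI of size `k`. -/
def HasSdpExt {d : ℕ} (P : Set (EuclideanSpace ℝ (Fin d))) (k : ℕ) : Prop :=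
  ∃ (n : ℕ) (φ : EuclideanSpace ℝ (Fin n) →ᵃ[ℝ] EuclideanSpace ℝ (Fin d))
    (M : EuclideanSpace ℝ (Fin n) →ᵃ[ℝ] Matrix (Fin k) (Fin k) ℝ),
    (∀ x, (M x).IsSymm) ∧ P = φ '' {x | (M x).PosSemidef}

/-- `P` has an extended formulation with `l` linear inequalities. -/
def HasLinExt {d : ℕ} (P : Set (EuclideanSpace ℝ (Fin d))) (l : ℕ) : Prop :=
  ∃ (n : ℕ) (φ : EuclideanSpace ℝ (Fin n) →ᵃ[ℝ] EuclideanSpace ℝ (Fin d))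
    (a : Fin l → (EuclideanSpace ℝ (Fin n) →ᵃ[ℝ] ℝ)),
    P = φ '' {x | ∀ i, 0 ≤ a i x}

open Classical in
/-- Semidefinite extension complexity. -/
def sxc {d : ℕ} (P : Set (EuclideanSpace ℝ (Fin d))) : ℕ :=
  if P = ∅ ∨ ∃ p, P = {p} then 0 else sInf {k | HasSdpExt P k}

open Classical in
/-- Linear extension complexity. -/
def xc {d : ℕ} (P : Set (EuclideanSpace ℝ (Fin d))) : ℕ :=
  if P = ∅ ∨ ∃ p, P = {p} then 0 else sInf {l | HasLinExt P l}

/-- Spectral norm of a square real matrix (the operator norm of the induced map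
on Euclidean space; for a symmetric matrix this is the largest absolute value of
an eigenvalue). -/
def specNorm {ι : Type*} [Fintype ι] [DecidableEq ι] (T : Matrix ι ι ℝ) : ℝ :=
  ‖LinearMap.toContinuousLinearMap (Matrix.toEuclideanLin T)‖

/-- Norm of a linear map into square matrices: the maximum of the spectral norm
of the values over the unit ball. -/
def lmNorm {n : ℕ} {ι : Type*} [Fintype ι] [DecidableEq ι]
    (A : EuclideanSpace ℝ (Fin n) →ₗ[ℝ] Matrix ι ι ℝ) : ℝ :=
  sSup {r | ∃ x : EuclideanSpace ℝ (Fin n), ‖x‖ ≤ 1 ∧ r = specNorm (A x)}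

/-- A 0/1-polytope: the convex hull of a set of 0/1-vectors. -/
def IsZeroOnePolytope {d : ℕ} (P : Set (EuclideanSpace ℝ (Fin d))) : Prop :=
  ∃ V : Set (EuclideanSpace ℝ (Fin d)),
    V ⊆ {x | ∀ i, x i = 0 ∨ x i = 1} ∧ P = convexHull ℝ V

set_option maxHeartbeats 1000000
set_option synthInstance.maxHeartbeats 400000

lemma specNorm_smul {ι : Type*} [Fintype ι] [DecidableEq ι] (c : ℝ) (T : Matrix ι ι ℝ) :
    specNorm (c • T) = |c| * specNorm T := by
  unfold specNorm
  rw [_root_.map_smul, _root_.map_smul, ← Real.norm_eq_abs]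
  exact norm_smul c (LinearMap.toContinuousLinearMap (Matrix.toEuclideanLin T))

lemma dotProduct_le_specNorm {ι : Type*} [Fintype ι] [DecidableEq ι]
    (T : Matrix ι ι ℝ) (v : ι → ℝ) :
    dotProduct v (Matrix.mulVec T v) ≤ specNorm T * dotProduct v v := by
  set w : EuclideanSpace ℝ ι := (WithLp.equiv 2 _).symm v with hw
  have h1 : dotProduct v (Matrix.mulVec T v) = inner ℝ w (Matrix.toEuclideanLin T w) := by
    rw [hw, WithLp.equiv_symm_apply, Matrix.toEuclideanLin_toLp, EuclideanSpace.inner_toLp_toLp]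
    simp [dotProduct_comm]
  have h2 : dotProduct v v = ‖w‖ ^ 2 := by
    have : (inner ℝ w w : ℝ) = dotProduct v v := by
      rw [hw, WithLp.equiv_symm_apply, EuclideanSpace.inner_toLp_toLp]; simp
    rw [← this, real_inner_self_eq_norm_sq]
  rw [h1, h2]
  calc (inner ℝ w (Matrix.toEuclideanLin T w) : ℝ)
      ≤ ‖w‖ * ‖Matrix.toEuclideanLin T w‖ := real_inner_le_norm _ _
    _ ≤ ‖w‖ * (specNorm T * ‖w‖) := by
        apply mul_le_mul_of_nonneg_left _ (norm_nonneg w)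
        exact (LinearMap.toContinuousLinearMap (Matrix.toEuclideanLin T)).le_opNorm w
    _ = specNorm T * ‖w‖ ^ 2 := by ring

lemma lmNorm_bddAbove {n : ℕ} {ι : Type*} [Fintype ι] [DecidableEq ι]
    (B : EuclideanSpace ℝ (Fin n) →ₗ[ℝ] Matrix ι ι ℝ) :
    BddAbove {r | ∃ x : EuclideanSpace ℝ (Fin n), ‖x‖ ≤ 1 ∧ r = specNorm (B x)} := by
  classical
  let g : EuclideanSpace ℝ (Fin n) →ₗ[ℝ] (EuclideanSpace ℝ ι →L[ℝ] EuclideanSpace ℝ ι) :=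
    { toFun := fun x => LinearMap.toContinuousLinearMap (Matrix.toEuclideanLin (B x))
      map_add' := fun a b => by simp [_root_.map_add]
      map_smul' := fun c a => by simp [_root_.map_smul] }
  let G := LinearMap.toContinuousLinearMap g
  refine ⟨‖G‖, fun r ⟨x, hx1, hx2⟩ => ?_⟩
  have hGx : specNorm (B x) = ‖G x‖ := by
    have hGg : G x = g x := by simp [G]
    rw [hGg]; rfl
  rw [hx2, hGx]
  calc ‖G x‖ ≤ ‖G‖ * ‖x‖ := G.le_opNorm x
    _ ≤ ‖G‖ * 1 := mul_le_mul_of_nonneg_left hx1 (norm_nonneg G)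
    _ = ‖G‖ := mul_one _

lemma lmNorm_nonneg {n : ℕ} {ι : Type*} [Fintype ι] [DecidableEq ι]
    (B : EuclideanSpace ℝ (Fin n) →ₗ[ℝ] Matrix ι ι ℝ) : 0 ≤ lmNorm B := by
  apply le_csSup (lmNorm_bddAbove B)
  exact ⟨0, by simp, by simp [specNorm]⟩

lemma specNorm_apply_le {n : ℕ} {ι : Type*} [Fintype ι] [DecidableEq ι]
    (B : EuclideanSpace ℝ (Fin n) →ₗ[ℝ] Matrix ι ι ℝ) (x : EuclideanSpace ℝ (Fin n)) :
    specNorm (B x) ≤ lmNorm B * ‖x‖ := by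
  rcases eq_or_ne x 0 with rfl | hx
  · simp [specNorm]
  · have hnx : 0 < ‖x‖ := norm_pos_iff.mpr hx
    have hu : ‖(‖x‖⁻¹ • x : EuclideanSpace ℝ (Fin n))‖ ≤ 1 := by
      rw [norm_smul, norm_inv, norm_norm, inv_mul_cancel₀ hnx.ne']
    have hmem : specNorm (B (‖x‖⁻¹ • x)) ≤ lmNorm B :=
      le_csSup (lmNorm_bddAbove B) ⟨_, hu, rfl⟩
    rw [_root_.map_smul, specNorm_smul, abs_inv, abs_norm] at hmem
    calc specNorm (B x) = ‖x‖ * (‖x‖⁻¹ * specNorm (B x)) := by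
          field_simp
      _ ≤ ‖x‖ * lmNorm B := mul_le_mul_of_nonneg_left hmem hnx.le
      _ = lmNorm B * ‖x‖ := mul_comm _ _

theorem statement9 (n k : ℕ)
    (A A' : EuclideanSpace ℝ (Fin n) →ₗ[ℝ] Matrix (Fin k) (Fin k) ℝ)
    (hsymm : ∀ x, (A x).IsSymm) (hsymm' : ∀ x, (A' x).IsSymm)
    (x : EuclideanSpace ℝ (Fin n)) (hx : ‖x‖ ≤ n)
    (hpsd : (A x + 1).PosSemidef) :
    (A' ((1 / (1 + n * lmNorm (A - A'))) • x) + 1).PosSemidef := by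
  set c := lmNorm (A - A') with hc
  have hc0 : 0 ≤ c := lmNorm_nonneg _
  have hn0 : (0:ℝ) ≤ n := Nat.cast_nonneg n
  have hden : (0:ℝ) < 1 + n * c := by positivity
  set lam := 1 / (1 + (n:ℝ) * c) with hlam
  have hlam0 : 0 ≤ lam := by positivity
  have hkey : lam * ((n:ℝ) * c) = 1 - lam := by
    rw [hlam]; field_simp; ring
  set S := (A - A') x with hS
  have hspec : specNorm S ≤ (n:ℝ) * c := by
    calc specNorm S ≤ c * ‖x‖ := specNorm_apply_le _ _
      _ ≤ c * n := mul_le_mul_of_nonneg_left hx hc0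
      _ = (n:ℝ) * c := mul_comm _ _
  have hA' : A' (lam • x) = lam • A x - lam • S := by
    rw [_root_.map_smul, hS, LinearMap.sub_apply, smul_sub]
    abel
  rw [Matrix.posSemidef_iff_dotProduct_mulVec]
  constructor
  · -- Hermitian
    have h1 : (A' (lam • x)).IsHermitian := by
      have := hsymm' (lam • x)
      rw [Matrix.IsSymm] at this
      rw [Matrix.IsHermitian, Matrix.conjTranspose_eq_transpose_of_trivial, this]
    exact h1.add Matrix.isHermitian_one
  · intro v
    have hstar : star v = v := by
      funext i; simp
    rw [hstar]
    have hd0 : 0 ≤ dotProduct v v :=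
      Finset.sum_nonneg fun i _ => mul_self_nonneg (v i)
    have h1 : 0 ≤ dotProduct v (Matrix.mulVec (A x) v) + dotProduct v v := by
      have := (Matrix.posSemidef_iff_dotProduct_mulVec.mp hpsd).2 v
      rw [hstar, Matrix.add_mulVec, Matrix.one_mulVec, dotProduct_add] at this
      exact this
    have h2 : dotProduct v (Matrix.mulVec S v) ≤ specNorm S * dotProduct v v :=
      dotProduct_le_specNorm S v
    rw [hA']
    rw [Matrix.add_mulVec, Matrix.one_mulVec, dotProduct_add, Matrix.sub_mulVec,
      dotProduct_sub, Matrix.smul_mulVec, Matrix.smul_mulVec,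
      dotProduct_smul, dotProduct_smul]
    have hspec' : lam * specNorm S ≤ 1 - lam := by
      calc lam * specNorm S ≤ lam * ((n:ℝ) * c) := mul_le_mul_of_nonneg_left hspec hlam0
        _ = 1 - lam := hkey
    have hSnonneg : 0 ≤ specNorm S := norm_nonneg _
    simp only [smul_eq_mul]
    nlinarith [mul_le_mul_of_nonneg_left h2 hlam0, mul_le_mul_of_nonneg_right hspec' hd0,
      mul_le_mul_of_nonneg_left h1 hlam0]
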